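/- In a housing market with strict preferences, the strong core contains at most one allocation: any two strong core allocations are equal. -/
import Mathlib


/-- `R i a b` means agent `i` weakly prefers object `a` to object `b`. -/
def TotalPref {n : ℕ} (R : Fin n → Fin n → Fin n → Prop) : Prop :=
  ∀ i a b, R i a b ∨ R i b a

def TransPref {n : ℕ} (R : Fin n → Fin n → Fin n → Prop) : Prop :=
  ∀ i a b c, R i a b → R i b c → R i a c

/-- Strict preference of agent `i`: `a` strictly preferred to `b`. -/
def SPref {n : ℕ} (R : Fin n → Fin n → Fin n → Prop) (i a b : Fin n) : Prop :=
  R i a b ∧ ¬ R i b a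

/-- Indifference of agent `i` between `a` and `b`. -/
def Indiff {n : ℕ} (R : Fin n → Fin n → Fin n → Prop) (i a b : Fin n) : Prop :=
  R i a b ∧ R i b a

/-- Preferences are strict: no ties between two distinct acceptable objects. -/
def StrictPrefs {n : ℕ} (R : Fin n → Fin n → Fin n → Prop) : Prop :=
  ∀ i a b, a ≠ b → R i a i → R i b i → ¬ (R i a b ∧ R i b a)

/-- Some coalition `S` blocks allocation `x` via an allocation `z` with
`{z i : i ∈ S} = S` and `z i` strictly preferred to `x i` for all `i ∈ S`. -/
def Blocks {n : ℕ} (R : Fin n → Fin n → Fin n → Prop) (x : Fin n → Fin n) : Prop :=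
  ∃ S : Set (Fin n), S.Nonempty ∧ ∃ z : Fin n → Fin n, Function.Bijective z ∧
    z '' S = S ∧ ∀ i ∈ S, SPref R i (z i) (x i)

/-- `x` is a core allocation. -/
def InCore {n : ℕ} (R : Fin n → Fin n → Fin n → Prop) (x : Fin n → Fin n) : Prop :=
  Function.Bijective x ∧ ¬ Blocks R x

/-- Some coalition weakly blocks allocation `x`. -/
def WeaklyBlocks {n : ℕ} (R : Fin n → Fin n → Fin n → Prop) (x : Fin n → Fin n) : Prop :=
  ∃ S : Set (Fin n), S.Nonempty ∧ ∃ z : Fin n → Fin n, Function.Bijective z ∧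
    z '' S = S ∧ (∀ i ∈ S, R i (z i) (x i)) ∧ ∃ j ∈ S, SPref R j (z j) (x j)

/-- `x` is a strong core allocation. -/
def InStrongCore {n : ℕ} (R : Fin n → Fin n → Fin n → Prop) (x : Fin n → Fin n) : Prop :=
  Function.Bijective x ∧ ¬ WeaklyBlocks R x

/-- `x` is a competitive allocation: part of a competitive equilibrium `(x, p)`. -/
def IsCompetitive {n : ℕ} (R : Fin n → Fin n → Fin n → Prop) (x : Fin n → Fin n) : Prop :=
  Function.Bijective x ∧ ∃ p : Fin n → ℝ,
    (∀ i, p (x i) ≤ p i) ∧ ∀ i j, SPref R i j (x i) → p i < p j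

/-- Some coalition antisymmetrically weakly blocks `x`. -/
def AWBlocks {n : ℕ} (R : Fin n → Fin n → Fin n → Prop) (x : Fin n → Fin n) : Prop :=
  ∃ S : Set (Fin n), S.Nonempty ∧ ∃ z : Fin n → Fin n, Function.Bijective z ∧
    z '' S = S ∧ (∀ i ∈ S, R i (z i) (x i)) ∧ (∃ j ∈ S, SPref R j (z j) (x j)) ∧
    ∀ i ∈ S, Indiff R i (z i) (x i) → z i = x i

/-- `x` is in the Wako-core (core defined by antisymmetric weak domination). -/
def InWakoCore {n : ℕ} (R : Fin n → Fin n → Fin n → Prop) (x : Fin n → Fin n) : Prop :=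
  Function.Bijective x ∧ ¬ AWBlocks R x

/-- `R'` is an improvement for agent `i` with respect to `R`:
(1) agent `i`'s preferences are unchanged; (2) for each `j ≠ i`, object `i`
only moves weakly up among `j`'s acceptable objects; (3) the relative ranking of
acceptable objects different from `i` is unchanged. -/
def Improvement {n : ℕ} (R R' : Fin n → Fin n → Fin n → Prop) (i : Fin n) : Prop :=
  (∀ a b, R' i a b ↔ R i a b) ∧
  (∀ j, j ≠ i → ∀ k, R j k j →
    (Indiff R j i k → R' j i k) ∧ (SPref R j i k → SPref R' j i k)) ∧
  (∀ j, j ≠ i → ∀ k l, k ≠ i → l ≠ i → R j k j → R j l j → (R j k l ↔ R' j k l))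

lemma pref_refl {n : ℕ} (R : Fin n → Fin n → Fin n → Prop) (hT : TotalPref R)
    (i a : Fin n) : R i a a := by
  rcases hT i a a with h | h <;> exact h

lemma acceptable {n : ℕ} (R : Fin n → Fin n → Fin n → Prop) (hT : TotalPref R)
    {x : Fin n → Fin n} (hx : InStrongCore R x) (i : Fin n) : R i (x i) i := by
  by_contra h
  rcases hT i (x i) i with h' | h'
  · exact h h'
  · exact hx.2 ⟨{i}, ⟨i, rfl⟩, id, Function.bijective_id, Set.image_id _,
      fun j hj => by rw [Set.mem_singleton_iff] at hj; subst hj; exact h',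
      i, rfl, h', h⟩

lemma exists_periodic {n : ℕ} (f : Fin n → Fin n) (i : Fin n) :
    ∃ (p : Fin n) (k : ℕ), 0 < k ∧ f^[k] p = p ∧ ∃ m, f^[m] i = p := by
  obtain ⟨a, b, hab, heq⟩ := Finite.exists_ne_map_eq_of_infinite (fun m : ℕ => f^[m] i)
  rcases hab.lt_or_gt with h | h
  · refine ⟨f^[a] i, b - a, by omega, ?_, a, rfl⟩
    rw [← Function.iterate_add_apply]
    have : b - a + a = b := by omega
    rw [this]; exact heq.symm
  · refine ⟨f^[b] i, a - b, by omega, ?_, b, rfl⟩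
    rw [← Function.iterate_add_apply]
    have : a - b + b = a := by omega
    rw [this]; exact heq

lemma extend_block {n : ℕ} (v : Fin n → Fin n) (C : Set (Fin n))
    (hinj : ∀ a ∈ C, ∀ b ∈ C, v a = v b → a = b) (himg : v '' C = C) :
    ∃ w : Fin n → Fin n, Function.Bijective w ∧ w '' C = C ∧ ∀ j ∈ C, w j = v j := by
  classical
  have hv : ∀ a ∈ C, v a ∈ C := fun a ha => himg ▸ Set.mem_image_of_mem v ha
  refine ⟨fun j => if j ∈ C then v j else j, ?_, ?_, fun j hj => if_pos hj⟩
  · apply Finite.injective_iff_bijective.mp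
    intro a b hab
    by_cases ha : a ∈ C <;> by_cases hb : b ∈ C <;> simp only [ha, hb, if_pos, if_neg,
      if_true, if_false] at hab
    · exact hinj a ha b hb hab
    · exact absurd (hab ▸ hv a ha) hb
    · exact absurd (by rw [hab]; exact hv b hb) ha
    · exact hab
  · rw [Set.image_congr (fun j hj => if_pos hj)]
    exact himg

lemma main_aux {n : ℕ} (R : Fin n → Fin n → Fin n → Prop)
    (hT : TotalPref R) (hs : StrictPrefs R)
    (x z : Fin n → Fin n) (hx : InStrongCore R x) (hz : InStrongCore R z) :
    ∀ (k : ℕ) (U : Finset (Fin n)), U.card ≤ k →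
      (∀ j ∈ U, x j ∈ U) → (∀ j ∈ U, z j ∈ U) → ∀ i ∈ U, x i = z i := by
  classical
  have hrefl : ∀ i a, R i a a := pref_refl R hT
  have haccx : ∀ i, R i (x i) i := acceptable R hT hx
  have haccz : ∀ i, R i (z i) i := acceptable R hT hz
  have dicho : ∀ j, x j ≠ z j → ¬ SPref R j (z j) (x j) → SPref R j (x j) (z j) := by
    intro j hne hns
    have hnot := hs j (x j) (z j) hne (haccx j) (haccz j)
    rcases hT j (x j) (z j) with h | h
    · exact ⟨h, fun h' => hnot ⟨h, h'⟩⟩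
    · by_cases h2 : R j (x j) (z j)
      · exact absurd ⟨h2, h⟩ hnot
      · exact absurd ⟨h, h2⟩ hns
  intro k
  induction k with
  | zero =>
    intro U hU _ _ i hi
    rw [Nat.le_zero, Finset.card_eq_zero] at hU
    subst hU; exact absurd hi (Finset.notMem_empty i)
  | succ k ih =>
    intro U hU hxU hzU i hi
    set f : Fin n → Fin n := fun j => if SPref R j (z j) (x j) then z j else x j with hf
    have hfz : ∀ j, SPref R j (z j) (x j) → f j = z j := fun j h => if_pos h
    have hfx : ∀ j, ¬ SPref R j (z j) (x j) → f j = x j := fun j h => if_neg h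
    have hfU : ∀ j ∈ U, f j ∈ U := by
      intro j hj
      by_cases hc : SPref R j (z j) (x j)
      · rw [hfz j hc]; exact hzU j hj
      · rw [hfx j hc]; exact hxU j hj
    obtain ⟨p, K, hK, hpK, m0, hm0⟩ := exists_periodic f i
    set C : Set (Fin n) := Set.range (fun m => f^[m] p) with hC
    have hpC : p ∈ C := ⟨0, rfl⟩
    have hpU : p ∈ U := by
      rw [← hm0]
      clear hm0
      induction m0 with
      | zero => exact hi
      | succ m ihm => rw [Function.iterate_succ_apply']; exact hfU _ ihm
    have hK1 : K - 1 + 1 = K := Nat.succ_pred_eq_of_pos hK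
    have hperC : ∀ j ∈ C, f^[K] j = j := by
      rintro j ⟨m, rfl⟩
      show f^[K] (f^[m] p) = f^[m] p
      rw [← Function.iterate_add_apply, Nat.add_comm, Function.iterate_add_apply, hpK]
    have hfC : ∀ j ∈ C, f j ∈ C := by
      rintro j ⟨m, rfl⟩
      exact ⟨m + 1, Function.iterate_succ_apply' f m p⟩
    have key : ∀ c ∈ C, f^[K-1] (f c) = c := by
      intro c hc
      have h2 : f^[K-1+1] c = c := by rw [hK1]; exact hperC c hc
      rwa [Function.iterate_succ_apply] at h2
    have hinjC : ∀ a ∈ C, ∀ b ∈ C, f a = f b → a = b := by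
      intro a ha b hb hab
      calc a = f^[K-1] (f a) := (key a ha).symm
        _ = f^[K-1] (f b) := by rw [hab]
        _ = b := key b hb
    have hCimg : f '' C = C := by
      apply Set.Subset.antisymm
      · rintro _ ⟨j, hj, rfl⟩; exact hfC j hj
      · intro j hj
        have hj' : f^[K-1] j ∈ C := by
          obtain ⟨m, rfl⟩ := hj
          exact ⟨K - 1 + m, Function.iterate_add_apply f (K-1) m p⟩
        refine ⟨f^[K-1] j, hj', ?_⟩
        have h3 : f^[K-1+1] j = j := by rw [hK1]; exact hperC j hj
        rwa [Function.iterate_succ_apply'] at h3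
    obtain ⟨w, hwbij, hwC, hwv⟩ := extend_block f C hinjC hCimg
    have hnoB : ∀ j ∈ C, ¬ SPref R j (z j) (x j) := by
      intro j hj hstar
      apply hx.2
      refine ⟨C, ⟨p, hpC⟩, w, hwbij, hwC, ?_, j, hj, ?_⟩
      · intro a ha
        rw [hwv a ha]
        by_cases hca : SPref R a (z a) (x a)
        · rw [hfz a hca]; exact hca.1
        · rw [hfx a hca]; exact hrefl a (x a)
      · rw [hwv j hj, hfz j hstar]; exact hstar
    have hfxC : ∀ j ∈ C, f j = x j := fun j hj => hfx j (hnoB j hj)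
    have hxinjC : ∀ a ∈ C, ∀ b ∈ C, x a = x b → a = b := fun a _ b _ hab => hx.1.1 hab
    have hximg : x '' C = C := (Set.image_congr hfxC).symm.trans hCimg
    obtain ⟨w', hw'bij, hw'C, hw'v⟩ := extend_block x C hxinjC hximg
    have hCeq : ∀ j ∈ C, x j = z j := by
      intro j hj
      by_contra hne
      apply hz.2
      refine ⟨C, ⟨p, hpC⟩, w', hw'bij, hw'C, ?_, j, hj, ?_⟩
      · intro a ha
        rw [hw'v a ha]
        by_cases hane : x a = z a
        · rw [hane]; exact hrefl a (z a)
        · exact (dicho a hane (hnoB a ha)).1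
      · rw [hw'v j hj]; exact dicho j hne (hnoB j hj)
    by_cases hiC : i ∈ C
    · exact hCeq i hiC
    · set U' : Finset (Fin n) := U.filter (fun j => j ∉ C) with hU'
      have hU'sub : U' ⊂ U := Finset.filter_ssubset.mpr ⟨p, hpU, not_not.mpr hpC⟩
      have hU'card : U'.card ≤ k := by
        have := Finset.card_lt_card hU'sub
        omega
      have hzimg : z '' C = C := (Set.image_congr hCeq).symm.trans hximg
      have hxU' : ∀ j ∈ U', x j ∈ U' := by
        intro j hj
        rw [hU', Finset.mem_filter] at hj ⊢
        refine ⟨hxU j hj.1, fun hmem => ?_⟩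
        obtain ⟨c, hc, hceq⟩ := hximg ▸ hmem
        exact hj.2 (hx.1.1 hceq ▸ hc)
      have hzU' : ∀ j ∈ U', z j ∈ U' := by
        intro j hj
        rw [hU', Finset.mem_filter] at hj ⊢
        refine ⟨hzU j hj.1, fun hmem => ?_⟩
        obtain ⟨c, hc, hceq⟩ := hzimg ▸ hmem
        exact hj.2 (hz.1.1 hceq ▸ hc)
      exact ih U' hU'card hxU' hzU' i (by rw [hU', Finset.mem_filter]; exact ⟨hi, hiC⟩)

/-- With strict preferences, any two strong core allocations are equal. -/
theorem strongCore_unique_of_strict {n : ℕ} (R : Fin n → Fin n → Fin n → Prop)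
    (hT : TotalPref R) (htr : TransPref R) (hs : StrictPrefs R)
    (x z : Fin n → Fin n) (hx : InStrongCore R x) (hz : InStrongCore R z) :
    x = z := by
  classical
  funext i
  exact main_aux R hT hs x z hx hz Finset.univ.card Finset.univ le_rfl
    (fun j _ => Finset.mem_univ _) (fun j _ => Finset.mem_univ _) i (Finset.mem_univ i)
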